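/- Let (X, μ) be a measure space with μ(X) < ∞, let E be a real normed vector space, let f and f_n (n ∈ ℕ) be integrable functions X → E with ∫_X ‖f_n(x) − f(x)‖ dμ → 0, and let t_n be positive reals with t_n → ∞. Then ∫_X ‖f(x)‖ dμ ≤ liminf_{n→∞} ∫_X √(t_n⁻² + ‖f_n(x)‖²) dμ. -/

import Mathlib

open MeasureTheory Filter

lemma sqrt_add_le_aux (a b : ℝ) (ha : 0 ≤ a) (hb : 0 ≤ b) :
    Real.sqrt (a + b) ≤ Real.sqrt a + Real.sqrt b := by
  have h1 : a + b ≤ (Real.sqrt a + Real.sqrt b) ^ 2 := by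
    nlinarith [Real.sq_sqrt ha, Real.sq_sqrt hb, Real.sqrt_nonneg a, Real.sqrt_nonneg b]
  calc Real.sqrt (a + b) ≤ Real.sqrt ((Real.sqrt a + Real.sqrt b) ^ 2) :=
        Real.sqrt_le_sqrt h1
    _ = Real.sqrt a + Real.sqrt b := Real.sqrt_sq (by positivity)

/-- 'liminf' half of the Γ-convergence of the `t`-GMS energies to the total variation:
if `fₙ → f` in `L¹` and `tₙ → ∞`, then
`∫ ‖f‖ dμ ≤ liminf ∫ √(tₙ⁻² + ‖fₙ‖²) dμ`. -/
theorem tGMS_energy_liminf {X E : Type*} [MeasurableSpace X] (μ : Measure X)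
    (hμ : μ Set.univ < ⊤) [NormedAddCommGroup E]
    (f : X → E) (fn : ℕ → X → E)
    (hf : Integrable f μ) (hfn : ∀ n, Integrable (fn n) μ)
    (hL1 : Tendsto (fun n => ∫ x, ‖fn n x - f x‖ ∂μ) atTop (nhds 0))
    (t : ℕ → ℝ) (ht : ∀ n, 0 < t n) (htop : Tendsto t atTop atTop) :
    ∫ x, ‖f x‖ ∂μ ≤
      liminf (fun n => ∫ x, Real.sqrt ((t n)⁻¹ ^ 2 + ‖fn n x‖ ^ 2) ∂μ) atTop := by
  have : IsFiniteMeasure μ := ⟨hμ⟩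
  set u : ℕ → ℝ := fun n => ∫ x, ‖f x‖ ∂μ - ∫ x, ‖fn n x - f x‖ ∂μ with hu_def
  set v : ℕ → ℝ := fun n => ∫ x, Real.sqrt ((t n)⁻¹ ^ 2 + ‖fn n x‖ ^ 2) ∂μ with hv_def
  have hdiff : ∀ n, Integrable (fun x => ‖fn n x - f x‖) μ := fun n => ((hfn n).sub hf).norm
  have hptle : ∀ n x, Real.sqrt ((t n)⁻¹ ^ 2 + ‖fn n x‖ ^ 2) ≤ (t n)⁻¹ + ‖fn n x‖ := by
    intro n x
    calc Real.sqrt ((t n)⁻¹ ^ 2 + ‖fn n x‖ ^ 2)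
        ≤ Real.sqrt ((t n)⁻¹ ^ 2) + Real.sqrt (‖fn n x‖ ^ 2) :=
          sqrt_add_le_aux _ _ (by positivity) (by positivity)
      _ = (t n)⁻¹ + ‖fn n x‖ := by
          rw [Real.sqrt_sq (inv_nonneg.mpr (ht n).le), Real.sqrt_sq (norm_nonneg _)]
  have hconstadd : ∀ n, Integrable (fun x => (t n)⁻¹ + ‖fn n x‖) μ := fun n =>
    (integrable_const _).add (hfn n).norm
  have hginteg : ∀ n, Integrable (fun x => Real.sqrt ((t n)⁻¹ ^ 2 + ‖fn n x‖ ^ 2)) μ := by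
    intro n
    have hm : AEMeasurable (fun x => (t n)⁻¹ ^ 2 + ‖fn n x‖ ^ 2) μ :=
      aemeasurable_const.add (((hfn n).aestronglyMeasurable.norm.aemeasurable).pow_const 2)
    refine (hconstadd n).mono'
      (Real.continuous_sqrt.measurable.comp_aemeasurable hm).aestronglyMeasurable ?_
    filter_upwards with x
    rw [Real.norm_eq_abs, abs_of_nonneg (Real.sqrt_nonneg _)]
    exact hptle n x
  have huv : ∀ n, u n ≤ v n := by
    intro n
    have h1 : ∫ x, ‖f x‖ ∂μ ≤ ∫ x, ‖fn n x - f x‖ ∂μ + ∫ x, ‖fn n x‖ ∂μ := by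
      calc ∫ x, ‖f x‖ ∂μ ≤ ∫ x, (‖fn n x - f x‖ + ‖fn n x‖) ∂μ := by
            refine integral_mono hf.norm ((hdiff n).add (hfn n).norm) fun x => ?_
            calc ‖f x‖ = ‖fn n x - (fn n x - f x)‖ := by congr 1; abel
              _ ≤ ‖fn n x‖ + ‖fn n x - f x‖ := norm_sub_le _ _
              _ = ‖fn n x - f x‖ + ‖fn n x‖ := add_comm _ _
        _ = ∫ x, ‖fn n x - f x‖ ∂μ + ∫ x, ‖fn n x‖ ∂μ := integral_add (hdiff n) (hfn n).norm
    have h2 : ∫ x, ‖fn n x‖ ∂μ ≤ v n := by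
      refine integral_mono (hfn n).norm (hginteg n) fun x => ?_
      have h := Real.sqrt_le_sqrt
        (le_add_of_nonneg_left (sq_nonneg ((t n)⁻¹)) : ‖fn n x‖ ^ 2 ≤ (t n)⁻¹ ^ 2 + ‖fn n x‖ ^ 2)
      rwa [Real.sqrt_sq (norm_nonneg _)] at h
    simp only [hu_def, sub_le_iff_le_add]
    linarith
  have hut : Tendsto u atTop (nhds (∫ x, ‖f x‖ ∂μ)) := by
    have := (tendsto_const_nhds (x := ∫ x, ‖f x‖ ∂μ) (f := atTop (α := ℕ))).sub hL1
    simpa using this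
  -- v is eventually bounded above
  have hvb : ∀ᶠ n in atTop, v n ≤ (μ Set.univ).toReal + (∫ x, ‖f x‖ ∂μ) + 1 := by
    have h1 : ∀ᶠ n in atTop, 1 ≤ t n := htop.eventually_ge_atTop 1
    have h2 : ∀ᶠ n in atTop, ∫ x, ‖fn n x - f x‖ ∂μ ≤ 1 :=
      hL1.eventually (eventually_le_nhds (by norm_num))
    filter_upwards [h1, h2] with n hn1 hn2
    have hinv : (t n)⁻¹ ≤ 1 := by
      rw [inv_le_one_iff₀]; right; exact hn1
    have hA : v n ≤ ∫ x, ((t n)⁻¹ + ‖fn n x‖) ∂μ :=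
      integral_mono (hginteg n) (hconstadd n) (hptle n)
    have hB : ∫ x, ((t n)⁻¹ + ‖fn n x‖) ∂μ
        = (μ Set.univ).toReal * (t n)⁻¹ + ∫ x, ‖fn n x‖ ∂μ := by
      rw [integral_add (integrable_const _) (hfn n).norm, integral_const, smul_eq_mul, measureReal_def]
    have hC : ∫ x, ‖fn n x‖ ∂μ ≤ ∫ x, ‖fn n x - f x‖ ∂μ + ∫ x, ‖f x‖ ∂μ := by
      calc ∫ x, ‖fn n x‖ ∂μ ≤ ∫ x, (‖fn n x - f x‖ + ‖f x‖) ∂μ := by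
            refine integral_mono (hfn n).norm ((hdiff n).add hf.norm) fun x => ?_
            calc ‖fn n x‖ = ‖(fn n x - f x) + f x‖ := by congr 1; abel
              _ ≤ ‖fn n x - f x‖ + ‖f x‖ := norm_add_le _ _
        _ = ∫ x, ‖fn n x - f x‖ ∂μ + ∫ x, ‖f x‖ ∂μ := integral_add (hdiff n) hf.norm
    have htr : (0:ℝ) ≤ (μ Set.univ).toReal := ENNReal.toReal_nonneg
    nlinarith [inv_nonneg.mpr (ht n).le]
  have hliminf_u : liminf u atTop = ∫ x, ‖f x‖ ∂μ := hut.liminf_eq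
  rw [← hliminf_u]
  exact liminf_le_liminf (Eventually.of_forall huv) hut.isBoundedUnder_ge
    (isCoboundedUnder_ge_of_eventually_le atTop hvb)
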